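/- For α > 0 and the cost c(x,y) = (1/α) log(1 + α x·y) on ℝ₊₊^d × ℝ₊₊^d, a function f : ℝ₊₊^d → ℝ is c-concave if and only if e^{αf} is concave on ℝ₊₊^d. -/

import Mathlib

open scoped RealInnerProductSpace
open Real

theorem inner_eq_sum {d : ℕ} (x y : EuclideanSpace ℝ (Fin d)) : ⟪x,y⟫ = ∑ i, x i * y i := by
  simp [PiLp.inner_apply, RCLike.inner_apply, mul_comm]

theorem inner_nonneg' {d : ℕ} (x y : EuclideanSpace ℝ (Fin d)) (hx : ∀ i, 0 ≤ x i)
    (hy : ∀ i, 0 ≤ y i) : 0 ≤ ⟪x,y⟫ := by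
  rw [inner_eq_sum]
  exact Finset.sum_nonneg fun i _ => mul_nonneg (hx i) (hy i)

theorem exists_kappa {d : ℕ} (y w : EuclideanSpace ℝ (Fin d))
    (hy : ∀ i, 0 < y i) (hw : ∀ i, 0 < w i) :
    ∃ κ : ℝ, 0 < κ ∧ ∀ x : EuclideanSpace ℝ (Fin d), (∀ i, 0 ≤ x i) →
      κ * ⟪x, w⟫ ≤ ⟪x, y⟫ := by
  rcases isEmpty_or_nonempty (Fin d) with hd | hd
  · refine ⟨1, one_pos, fun x hx => ?_⟩
    rw [inner_eq_sum, inner_eq_sum]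
    simp
  · refine ⟨Finset.univ.inf' ⟨Classical.arbitrary (Fin d), Finset.mem_univ _⟩ (fun i => y i / w i),
      ?_, fun x hx => ?_⟩
    · refine (Finset.lt_inf'_iff _).2 ?_
      exact fun i _ => div_pos (hy i) (hw i)
    · rw [inner_eq_sum, inner_eq_sum, Finset.mul_sum]
      apply Finset.sum_le_sum
      intro i _
      have h2 : Finset.univ.inf' ⟨Classical.arbitrary (Fin d), Finset.mem_univ _⟩
          (fun i => y i / w i) * w i ≤ y i := by
        rw [← le_div_iff₀ (hw i)]
        exact Finset.inf'_le _ (Finset.mem_univ i)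
      calc Finset.univ.inf' _ (fun i => y i / w i) * (x i * w i)
          = x i * (Finset.univ.inf' ⟨Classical.arbitrary (Fin d), Finset.mem_univ _⟩
              (fun i => y i / w i) * w i) := by ring
        _ ≤ x i * y i := mul_le_mul_of_nonneg_left h2 (hx i)

/-- If `exp (α f)` is dominated on the positive quadrant by a positive affine function with
positive slopes, then for every positive `y` the family `x' ↦ c(x',y) - f x'` is bounded below. -/
theorem term_lower_bound {d : ℕ} {α : ℝ} (hα : 0 < α) (f : EuclideanSpace ℝ (Fin d) → ℝ)
    {c'' : ℝ} (hc'' : 0 < c'') {s'' : EuclideanSpace ℝ (Fin d)} (hs'' : ∀ i, 0 < s'' i)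
    (hdom : ∀ x' : EuclideanSpace ℝ (Fin d), (∀ i, 0 < x' i) →
      exp (α * f x') ≤ c'' + ⟪s'', x'⟫)
    (y : EuclideanSpace ℝ (Fin d)) (hy : ∀ i, 0 < y i) :
    ∃ m : ℝ, ∀ x' : EuclideanSpace ℝ (Fin d), (∀ i, 0 < x' i) →
      m ≤ (1/α) * log (1 + α * ⟪x', y⟫) - f x' := by
  obtain ⟨κ, hκ, hκle⟩ := exists_kappa y s'' hy hs''
  set m0 : ℝ := min (1/c'') (α * κ) with hm0def
  have hm0 : 0 < m0 := lt_min (by positivity) (by positivity)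
  refine ⟨(1/α) * log m0, fun x' hx' => ?_⟩
  have hu : 0 ≤ ⟪s'', x'⟫ := inner_nonneg' _ _ (fun i => (hs'' i).le) (fun i => (hx' i).le)
  have hxy : 0 ≤ ⟪x', y⟫ := inner_nonneg' _ _ (fun i => (hx' i).le) (fun i => (hy i).le)
  have hκ2 : κ * ⟪x', s''⟫ ≤ ⟪x', y⟫ := hκle x' (fun i => (hx' i).le)
  rw [show (⟪x', s''⟫:ℝ) = ⟪s'', x'⟫ from real_inner_comm _ _] at hκ2
  have key : m0 * (c'' + ⟪s'', x'⟫) ≤ 1 + α * ⟪x', y⟫ := by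
    have h1 : m0 * c'' ≤ 1 := by
      have : m0 ≤ 1/c'' := min_le_left _ _
      calc m0 * c'' ≤ (1/c'') * c'' := mul_le_mul_of_nonneg_right this hc''.le
        _ = 1 := by field_simp
    have h2 : m0 * ⟪s'', x'⟫ ≤ α * ⟪x', y⟫ := by
      calc m0 * ⟪s'', x'⟫ ≤ (α * κ) * ⟪s'', x'⟫ :=
            mul_le_mul_of_nonneg_right (min_le_right _ _) hu
        _ = α * (κ * ⟪s'', x'⟫) := by ring
        _ ≤ α * ⟪x', y⟫ := mul_le_mul_of_nonneg_left hκ2 hα.le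
    nlinarith
  have hchain : m0 * exp (α * f x') ≤ 1 + α * ⟪x', y⟫ :=
    le_trans (mul_le_mul_of_nonneg_left (hdom x' hx') hm0.le) key
  have hlog : log (m0 * exp (α * f x')) ≤ log (1 + α * ⟪x', y⟫) :=
    Real.log_le_log (by positivity) hchain
  rw [Real.log_mul hm0.ne' (exp_ne_zero _), Real.log_exp] at hlog
  have := mul_le_mul_of_nonneg_left hlog (by positivity : (0:ℝ) ≤ 1/α)
  have heq : (1/α) * (log m0 + α * f x') = (1/α) * log m0 + f x' := by
    field_simp
  rw [heq] at this
  linarith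


theorem exists_supergrad {E : Type*} [NormedAddCommGroup E] [InnerProductSpace ℝ E]
    [FiniteDimensional ℝ E] {C : Set E} (hC : IsOpen C) {F : E → ℝ}
    (hF : ConcaveOn ℝ C F) {x₀ : E} (hx₀ : x₀ ∈ C) :
    ∃ s : E, ∀ x ∈ C, F x ≤ F x₀ + ⟪s, x - x₀⟫ := by
  classical
  set H : Set (E × ℝ) := {p | p.1 ∈ C ∧ p.2 < F p.1} with hH
  have hHopen : IsOpen H := by
    have hcont : ContinuousOn (fun p : E × ℝ => p.2 - F p.1) (C ×ˢ (Set.univ : Set ℝ)) := by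
      apply ContinuousOn.sub (continuous_snd.continuousOn)
      exact (hF.continuousOn hC).comp continuous_fst.continuousOn (fun p hp => hp.1)
    have h2 := hcont.isOpen_inter_preimage (t := Set.Iio (0:ℝ)) (hC.prod isOpen_univ) isOpen_Iio
    convert h2 using 1
    ext p
    simp only [hH, Set.mem_setOf_eq, Set.mem_inter_iff, Set.mem_prod, Set.mem_univ, and_true,
      Set.mem_preimage, Set.mem_Iio, sub_neg]
  have hHconv : Convex ℝ H := by
    rintro p ⟨hp1, hp2⟩ q ⟨hq1, hq2⟩ a b ha hb hab
    refine ⟨hF.1 hp1 hq1 ha hb hab, ?_⟩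
    rcases eq_or_lt_of_le ha with rfl | ha'
    · have hb1 : b = 1 := by linarith
      subst hb1
      simpa using hq2
    · rcases eq_or_lt_of_le hb with rfl | hb'
      · have ha1 : a = 1 := by linarith
        subst ha1
        simpa using hp2
      · have h3 : (a • p + b • q).2 < a * F p.1 + b * F q.1 := by
          have : (a • p + b • q).2 = a * p.2 + b * q.2 := rfl
          rw [this]
          exact add_lt_add ((mul_lt_mul_iff_right₀ ha').2 hp2) ((mul_lt_mul_iff_right₀ hb').2 hq2)
        have h4 := hF.2 hp1 hq1 ha hb hab
        simp only [smul_eq_mul] at h4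
        exact h3.trans_le h4
  have hpt : ((x₀, F x₀) : E × ℝ) ∉ H := by
    simp [hH]
  obtain ⟨L, hL⟩ := geometric_hahn_banach_open_point hHconv hHopen hpt
  have hdecomp : ∀ (x : E) (r : ℝ), L (x, r) = L (x, 0) + r * L (0, 1) := by
    intro x r
    have : ((x, r) : E × ℝ) = (x, 0) + r • ((0 : E), (1:ℝ)) := by
      simp [Prod.ext_iff]
    rw [this, map_add, map_smul]
    simp [smul_eq_mul]
  have hβpos : 0 < L (0, 1) := by
    have h1 : ((x₀, F x₀ - 1) : E × ℝ) ∈ H := ⟨hx₀, by show F x₀ - 1 < F x₀; linarith⟩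
    have h2 := hL _ h1
    rw [hdecomp x₀ (F x₀ - 1), hdecomp x₀ (F x₀)] at h2
    nlinarith
  set β : ℝ := L (0, 1) with hβ
  have key : ∀ x ∈ C, L (x, 0) + F x * β ≤ L (x₀, 0) + F x₀ * β := by
    intro x hx
    by_contra hcon
    push_neg at hcon
    have hgap : 0 < L (x, 0) + F x * β - (L (x₀, 0) + F x₀ * β) := by linarith
    set ε : ℝ := (L (x, 0) + F x * β - (L (x₀, 0) + F x₀ * β)) / (2 * β) with hε
    have hεpos : 0 < ε := div_pos hgap (by linarith)
    have hmem : ((x, F x - ε) : E × ℝ) ∈ H := ⟨hx, by show F x - ε < F x; linarith⟩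
    have h2 := hL _ hmem
    rw [hdecomp x (F x - ε), hdecomp x₀ (F x₀)] at h2
    have hεβ : ε * β = (L (x, 0) + F x * β - (L (x₀, 0) + F x₀ * β)) / 2 := by
      rw [hε]
      field_simp
    nlinarith
  set u : E →L[ℝ] ℝ := L.comp (ContinuousLinearMap.inl ℝ E ℝ) with hu
  have hu' : ∀ x : E, u x = L (x, 0) := fun x => rfl
  refine ⟨-(β⁻¹ • ((InnerProductSpace.toDual ℝ E).symm u)), fun x hx => ?_⟩
  have hinner : ⟪-(β⁻¹ • ((InnerProductSpace.toDual ℝ E).symm u)), x - x₀⟫ = -(β⁻¹ * (u x - u x₀)) := by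
    rw [inner_neg_left, real_inner_smul_left, inner_sub_right]
    simp [InnerProductSpace.toDual_symm_apply]
  rw [hinner]
  have hk := key x hx
  rw [← hu' x, ← hu' x₀] at hk
  have h6 : (u x + F x * β) * β⁻¹ ≤ (u x₀ + F x₀ * β) * β⁻¹ :=
    mul_le_mul_of_nonneg_right hk (inv_pos.mpr hβpos).le
  have h7 : β * β⁻¹ = 1 := mul_inv_cancel₀ hβpos.ne'
  rw [add_mul, add_mul, mul_assoc, mul_assoc, h7, mul_one, mul_one] at h6
  linarith


theorem forward_bdd {d : ℕ} {α : ℝ} (hα : 0 < α) (f : EuclideanSpace ℝ (Fin d) → ℝ)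
    (h : ∀ x : EuclideanSpace ℝ (Fin d), (∀ i, 0 < x i) →
      (⨅ y : {z : EuclideanSpace ℝ (Fin d) // ∀ i, 0 < z i},
        ((1/α) * Real.log (1 + α * ⟪x, (y : EuclideanSpace ℝ (Fin d))⟫) -
          ⨅ x' : {z : EuclideanSpace ℝ (Fin d) // ∀ i, 0 < z i},
            ((1/α) * Real.log
                (1 + α * ⟪(x' : EuclideanSpace ℝ (Fin d)),
                  (y : EuclideanSpace ℝ (Fin d))⟫) -
              f x'))) = f x) :
    ∀ y : {z : EuclideanSpace ℝ (Fin d) // ∀ i, 0 < z i},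
      BddBelow (Set.range fun x' : {z : EuclideanSpace ℝ (Fin d) // ∀ i, 0 < z i} =>
        ((1/α) * Real.log (1 + α * ⟪(x' : EuclideanSpace ℝ (Fin d)),
          (y : EuclideanSpace ℝ (Fin d))⟫) - f x')) := by
  classical
  haveI : Nonempty {z : EuclideanSpace ℝ (Fin d) // ∀ i, 0 < z i} :=
    ⟨⟨(WithLp.toLp 2 (fun _ => (1:ℝ)) : EuclideanSpace ℝ (Fin d)), fun _ => by simp⟩⟩
  have hαne : α ≠ 0 := hα.ne'
  have hargpos : ∀ (u v : EuclideanSpace ℝ (Fin d)), (∀ i, 0 ≤ u i) → (∀ i, 0 ≤ v i) →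
      0 < 1 + α * ⟪u, v⟫ := by
    intro u v hu hv
    have := inner_nonneg' u v hu hv
    nlinarith
  have hcnn : ∀ (u : EuclideanSpace ℝ (Fin d)) (v : {z : EuclideanSpace ℝ (Fin d) // ∀ i, 0 < z i}),
      (∀ i, 0 < u i) → 0 ≤ (1/α) * Real.log (1 + α * ⟪u, (v : EuclideanSpace ℝ (Fin d))⟫) := by
    intro u v hu
    apply mul_nonneg (by positivity)
    apply Real.log_nonneg
    have := inner_nonneg' u (v : EuclideanSpace ℝ (Fin d)) (fun i => (hu i).le)
      (fun i => (v.2 i).le)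
    nlinarith
  by_cases hbb : ∃ y₀ : {z : EuclideanSpace ℝ (Fin d) // ∀ i, 0 < z i},
      BddBelow (Set.range fun x' : {z : EuclideanSpace ℝ (Fin d) // ∀ i, 0 < z i} =>
        ((1/α) * Real.log (1 + α * ⟪(x' : EuclideanSpace ℝ (Fin d)),
          (y₀ : EuclideanSpace ℝ (Fin d))⟫) - f x'))
  · obtain ⟨y₀, m₀, hm₀⟩ := hbb
    have hm : ∀ (x' : EuclideanSpace ℝ (Fin d)) (hx' : ∀ i, 0 < x' i),
        m₀ ≤ (1/α) * Real.log (1 + α * ⟪x', (y₀ : EuclideanSpace ℝ (Fin d))⟫) - f x' :=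
      fun x' hx' => hm₀ ⟨(⟨x', hx'⟩ : {z : EuclideanSpace ℝ (Fin d) // ∀ i, 0 < z i}), rfl⟩
    -- dominance by an affine function
    have hdom : ∀ x' : EuclideanSpace ℝ (Fin d), (∀ i, 0 < x' i) →
        exp (α * f x') ≤ exp (-(α * m₀)) +
          ⟪(α * exp (-(α * m₀))) • (y₀ : EuclideanSpace ℝ (Fin d)), x'⟫ := by
      intro x' hx'
      have h1 := hm x' hx'
      have hA : 0 < 1 + α * ⟪x', (y₀ : EuclideanSpace ℝ (Fin d))⟫ :=
        hargpos _ _ (fun i => (hx' i).le) (fun i => (y₀.2 i).le)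
      have h2 : α * m₀ + α * f x' ≤ Real.log (1 + α * ⟪x', (y₀ : EuclideanSpace ℝ (Fin d))⟫) := by
        have h3 := mul_le_mul_of_nonneg_left h1 hα.le
        have h4 : α * ((1/α) * Real.log (1 + α * ⟪x', (y₀ : EuclideanSpace ℝ (Fin d))⟫) - f x')
            = Real.log (1 + α * ⟪x', (y₀ : EuclideanSpace ℝ (Fin d))⟫) - α * f x' := by
          field_simp; try ring
        rw [h4] at h3
        linarith
      have h5 : exp (α * m₀ + α * f x') ≤ 1 + α * ⟪x', (y₀ : EuclideanSpace ℝ (Fin d))⟫ := by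
        calc exp (α * m₀ + α * f x')
            ≤ exp (Real.log (1 + α * ⟪x', (y₀ : EuclideanSpace ℝ (Fin d))⟫)) :=
              Real.exp_le_exp.mpr h2
          _ = 1 + α * ⟪x', (y₀ : EuclideanSpace ℝ (Fin d))⟫ := Real.exp_log hA
      rw [Real.exp_add] at h5
      have h6 := mul_le_mul_of_nonneg_left h5 (Real.exp_pos (-(α * m₀))).le
      have h7 : exp (-(α * m₀)) * (exp (α * m₀) * exp (α * f x')) = exp (α * f x') := by
        rw [← mul_assoc, ← Real.exp_add]
        simp
      rw [h7] at h6
      have h8 : ⟪(α * exp (-(α * m₀))) • (y₀ : EuclideanSpace ℝ (Fin d)), x'⟫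
          = (α * exp (-(α * m₀))) * ⟪x', (y₀ : EuclideanSpace ℝ (Fin d))⟫ := by
        rw [real_inner_smul_left]
        rw [show ⟪(y₀ : EuclideanSpace ℝ (Fin d)), x'⟫ = ⟪x', (y₀ : EuclideanSpace ℝ (Fin d))⟫
          from real_inner_comm _ _]
      rw [h8]
      nlinarith [Real.exp_pos (-(α * m₀))]
    intro y
    obtain ⟨m, hm'⟩ := term_lower_bound hα f (Real.exp_pos (-(α * m₀)))
      (fun i => mul_pos (by positivity) (y₀.2 i)) hdom
      (y : EuclideanSpace ℝ (Fin d)) y.2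
    exact ⟨m, by rintro _ ⟨x', rfl⟩; exact hm' x'.1 x'.2⟩
  · push_neg at hbb
    exfalso
    have hg0 : ∀ y : {z : EuclideanSpace ℝ (Fin d) // ∀ i, 0 < z i},
        (⨅ x' : {z : EuclideanSpace ℝ (Fin d) // ∀ i, 0 < z i},
          ((1/α) * Real.log (1 + α * ⟪(x' : EuclideanSpace ℝ (Fin d)),
            (y : EuclideanSpace ℝ (Fin d))⟫) - f x')) = 0 :=
      fun y => Real.iInf_of_not_bddBelow (hbb y)
    have hf0 : ∀ x : EuclideanSpace ℝ (Fin d), (∀ i, 0 < x i) → f x = 0 := by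
      intro x hx
      have h1 := h x hx
      simp only [hg0, sub_zero] at h1
      rw [← h1]
      apply le_antisymm
      · apply le_of_forall_pos_le_add
        intro ε hε
        have hexpε : 1 < exp (α * ε) := by
          rw [show (1:ℝ) = exp 0 from (Real.exp_zero).symm]
          exact Real.exp_lt_exp.mpr (by positivity)
        set t : ℝ := min 1 ((exp (α * ε) - 1) / (α * (‖x‖^2 + 1))) with htdef
        have ht0 : 0 < t := lt_min one_pos (div_pos (by linarith) (by positivity))
        set y : {z : EuclideanSpace ℝ (Fin d) // ∀ i, 0 < z i} :=
          ⟨t • x, fun i => mul_pos ht0 (hx i)⟩ with hydef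
        have hinner : ⟪x, (y : EuclideanSpace ℝ (Fin d))⟫ = t * ‖x‖^2 := by
          show ⟪x, t • x⟫ = t * ‖x‖^2
          rw [real_inner_smul_right, real_inner_self_eq_norm_sq]
        have harg : 1 + α * (t * ‖x‖^2) ≤ exp (α * ε) := by
          have ht2 : t ≤ (exp (α * ε) - 1) / (α * (‖x‖^2 + 1)) := min_le_right _ _
          have ht3 : t * (α * (‖x‖^2 + 1)) ≤ exp (α * ε) - 1 :=
            (le_div_iff₀ (by positivity)).mp ht2
          nlinarith [norm_nonneg x, sq_nonneg ‖x‖]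
        have hcle : (1/α) * Real.log (1 + α * ⟪x, (y : EuclideanSpace ℝ (Fin d))⟫) ≤ ε := by
          rw [hinner]
          have hpos' : 0 < 1 + α * (t * ‖x‖^2) := by positivity
          have hl := Real.log_le_log hpos' harg
          rw [Real.log_exp] at hl
          calc (1/α) * Real.log (1 + α * (t * ‖x‖^2)) ≤ (1/α) * (α * ε) :=
                mul_le_mul_of_nonneg_left hl (by positivity)
            _ = ε := by field_simp
        calc (⨅ y' : {z : EuclideanSpace ℝ (Fin d) // ∀ i, 0 < z i},
              (1/α) * Real.log (1 + α * ⟪x, (y' : EuclideanSpace ℝ (Fin d))⟫))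
            ≤ (1/α) * Real.log (1 + α * ⟪x, (y : EuclideanSpace ℝ (Fin d))⟫) :=
              ciInf_le ⟨0, by rintro _ ⟨y', rfl⟩; exact hcnn x y' hx⟩ y
          _ ≤ ε := hcle
          _ ≤ 0 + ε := by linarith
      · exact le_ciInf (fun y => hcnn x y hx)
    set y₁ : {z : EuclideanSpace ℝ (Fin d) // ∀ i, 0 < z i} :=
      ⟨(WithLp.toLp 2 (fun _ => (1:ℝ)) : EuclideanSpace ℝ (Fin d)), fun _ => by simp⟩ with hy₁
    apply hbb y₁
    refine ⟨0, ?_⟩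
    rintro _ ⟨x', rfl⟩
    have hge := hcnn x'.1 y₁ x'.2
    have hf := hf0 x'.1 x'.2
    show (0:ℝ) ≤ (1/α) * Real.log (1 + α * ⟪(x' : EuclideanSpace ℝ (Fin d)),
      (y₁ : EuclideanSpace ℝ (Fin d))⟫) - f x'
    rw [hf, sub_zero]
    exact hge


theorem forward_dir {d : ℕ} {α : ℝ} (hα : 0 < α) (f : EuclideanSpace ℝ (Fin d) → ℝ)
    (h : ∀ x : EuclideanSpace ℝ (Fin d), (∀ i, 0 < x i) →
      (⨅ y : {z : EuclideanSpace ℝ (Fin d) // ∀ i, 0 < z i},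
        ((1/α) * Real.log (1 + α * ⟪x, (y : EuclideanSpace ℝ (Fin d))⟫) -
          ⨅ x' : {z : EuclideanSpace ℝ (Fin d) // ∀ i, 0 < z i},
            ((1/α) * Real.log
                (1 + α * ⟪(x' : EuclideanSpace ℝ (Fin d)),
                  (y : EuclideanSpace ℝ (Fin d))⟫) -
              f x'))) = f x)
    (hbdd : ∀ y : {z : EuclideanSpace ℝ (Fin d) // ∀ i, 0 < z i},
      BddBelow (Set.range fun x' : {z : EuclideanSpace ℝ (Fin d) // ∀ i, 0 < z i} =>
        ((1/α) * Real.log (1 + α * ⟪(x' : EuclideanSpace ℝ (Fin d)),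
          (y : EuclideanSpace ℝ (Fin d))⟫) - f x'))) :
    ConcaveOn ℝ {x : EuclideanSpace ℝ (Fin d) | ∀ i, 0 < x i}
      (fun x => Real.exp (α * f x)) := by
  classical
  haveI : Nonempty {z : EuclideanSpace ℝ (Fin d) // ∀ i, 0 < z i} :=
    ⟨⟨(WithLp.toLp 2 (fun _ => (1:ℝ)) : EuclideanSpace ℝ (Fin d)), fun _ => by simp⟩⟩
  have hαne : α ≠ 0 := hα.ne'
  -- generic positivity of the log argument
  have hargpos : ∀ (u v : EuclideanSpace ℝ (Fin d)), (∀ i, 0 ≤ u i) → (∀ i, 0 ≤ v i) →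
      0 < 1 + α * ⟪u, v⟫ := by
    intro u v hu hv
    have := inner_nonneg' u v hu hv
    nlinarith
  -- the lower bound f x ≤ c x y - g y
  have outer_ge : ∀ (x : EuclideanSpace ℝ (Fin d)), (∀ i, 0 < x i) →
      ∀ y : {z : EuclideanSpace ℝ (Fin d) // ∀ i, 0 < z i},
      f x ≤ (1/α) * Real.log (1 + α * ⟪x, (y : EuclideanSpace ℝ (Fin d))⟫) -
        ⨅ x' : {z : EuclideanSpace ℝ (Fin d) // ∀ i, 0 < z i},
          ((1/α) * Real.log (1 + α * ⟪(x' : EuclideanSpace ℝ (Fin d)),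
            (y : EuclideanSpace ℝ (Fin d))⟫) - f x') := by
    intro x hx y
    have h3 := ciInf_le (hbdd y) (⟨x, hx⟩ : {z : EuclideanSpace ℝ (Fin d) // ∀ i, 0 < z i})
    simp only at h3
    linarith
  constructor
  · -- convexity of the quadrant
    intro p hp q hq a b ha hb hab
    intro i
    have hpi : 0 < p i := hp i
    have hqi : 0 < q i := hq i
    show 0 < a * p i + b * q i
    have h1 : a * min (p i) (q i) ≤ a * p i := mul_le_mul_of_nonneg_left (min_le_left _ _) ha
    have h2 : b * min (p i) (q i) ≤ b * q i := mul_le_mul_of_nonneg_left (min_le_right _ _) hb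
    have h3 : 0 < min (p i) (q i) := lt_min hpi hqi
    nlinarith
  · intro p hp q hq a b ha hb hab
    simp only [smul_eq_mul]
    have hp' : ∀ i, 0 < p i := hp
    have hq' : ∀ i, 0 < q i := hq
    have hxmem : ∀ i, 0 < (a • p + b • q) i := by
      intro i
      show 0 < a * p i + b * q i
      have h1 : a * min (p i) (q i) ≤ a * p i := mul_le_mul_of_nonneg_left (min_le_left _ _) ha
      have h2 : b * min (p i) (q i) ≤ b * q i := mul_le_mul_of_nonneg_left (min_le_right _ _) hb
      have h3 : 0 < min (p i) (q i) := lt_min (hp' i) (hq' i)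
      nlinarith
    -- the ε-approximation
    have key : ∀ ε > (0:ℝ), a * Real.exp (α * f p) + b * Real.exp (α * f q) ≤
        Real.exp (α * f (a • p + b • q)) * Real.exp (α * ε) := by
      intro ε hε
      have hx := h (a • p + b • q) hxmem
      have hlt : (⨅ y : {z : EuclideanSpace ℝ (Fin d) // ∀ i, 0 < z i},
          ((1/α) * Real.log (1 + α * ⟪a • p + b • q, (y : EuclideanSpace ℝ (Fin d))⟫) -
            ⨅ x' : {z : EuclideanSpace ℝ (Fin d) // ∀ i, 0 < z i},
              ((1/α) * Real.log (1 + α * ⟪(x' : EuclideanSpace ℝ (Fin d)),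
                (y : EuclideanSpace ℝ (Fin d))⟫) - f x'))) < f (a • p + b • q) + ε := by
        rw [hx]; linarith
      obtain ⟨y, hy⟩ := exists_lt_of_ciInf_lt hlt
      set G : ℝ := ⨅ x' : {z : EuclideanSpace ℝ (Fin d) // ∀ i, 0 < z i},
        ((1/α) * Real.log (1 + α * ⟪(x' : EuclideanSpace ℝ (Fin d)),
          (y : EuclideanSpace ℝ (Fin d))⟫) - f x') with hGdef
      have hyP : ∀ i, 0 < (y : EuclideanSpace ℝ (Fin d)) i := y.2
      have hAp : 0 < 1 + α * ⟪p, (y : EuclideanSpace ℝ (Fin d))⟫ :=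
        hargpos _ _ (fun i => (hp' i).le) (fun i => (hyP i).le)
      have hAq : 0 < 1 + α * ⟪q, (y : EuclideanSpace ℝ (Fin d))⟫ :=
        hargpos _ _ (fun i => (hq' i).le) (fun i => (hyP i).le)
      -- exp bound for a point
      have expbound : ∀ (u : EuclideanSpace ℝ (Fin d)), (∀ i, 0 < u i) →
          Real.exp (α * f u) ≤ (1 + α * ⟪u, (y : EuclideanSpace ℝ (Fin d))⟫) *
            Real.exp (-(α * G)) := by
        intro u hu
        have h1 := outer_ge u hu y
        rw [← hGdef] at h1
        have hAu : 0 < 1 + α * ⟪u, (y : EuclideanSpace ℝ (Fin d))⟫ :=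
          hargpos _ _ (fun i => (hu i).le) (fun i => (hyP i).le)
        have h2 : α * f u ≤ Real.log (1 + α * ⟪u, (y : EuclideanSpace ℝ (Fin d))⟫) - α * G := by
          have h3 := mul_le_mul_of_nonneg_left h1 hα.le
          have h4 : α * ((1/α) * Real.log (1 + α * ⟪u, (y : EuclideanSpace ℝ (Fin d))⟫) - G)
              = Real.log (1 + α * ⟪u, (y : EuclideanSpace ℝ (Fin d))⟫) - α * G := by
            field_simp; try ring
          rw [h4] at h3
          exact h3
        calc Real.exp (α * f u)
            ≤ Real.exp (Real.log (1 + α * ⟪u, (y : EuclideanSpace ℝ (Fin d))⟫) - α * G) :=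
              Real.exp_le_exp.mpr h2
          _ = (1 + α * ⟪u, (y : EuclideanSpace ℝ (Fin d))⟫) * Real.exp (-(α * G)) := by
              rw [Real.exp_sub, Real.exp_log hAu, div_eq_mul_inv, Real.exp_neg]
      have eP := expbound p hp'
      have eQ := expbound q hq'
      have hinn : ⟪(a • p + b • q : EuclideanSpace ℝ (Fin d)), (y : EuclideanSpace ℝ (Fin d))⟫
          = a * ⟪p, (y : EuclideanSpace ℝ (Fin d))⟫ + b * ⟪q, (y : EuclideanSpace ℝ (Fin d))⟫ := by
        rw [inner_add_left, real_inner_smul_left, real_inner_smul_left]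
      have hAx : 0 < 1 + α * ⟪a • p + b • q, (y : EuclideanSpace ℝ (Fin d))⟫ :=
        hargpos _ _ (fun i => (hxmem i).le) (fun i => (hyP i).le)
      have step1 : a * Real.exp (α * f p) + b * Real.exp (α * f q) ≤
          (1 + α * ⟪a • p + b • q, (y : EuclideanSpace ℝ (Fin d))⟫) * Real.exp (-(α * G)) := by
        have e1 : a * Real.exp (α * f p) ≤
            a * ((1 + α * ⟪p, (y : EuclideanSpace ℝ (Fin d))⟫) * Real.exp (-(α * G))) :=
          mul_le_mul_of_nonneg_left eP ha
        have e2 : b * Real.exp (α * f q) ≤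
            b * ((1 + α * ⟪q, (y : EuclideanSpace ℝ (Fin d))⟫) * Real.exp (-(α * G))) :=
          mul_le_mul_of_nonneg_left eQ hb
        have e3 : a * ((1 + α * ⟪p, (y : EuclideanSpace ℝ (Fin d))⟫) * Real.exp (-(α * G))) +
            b * ((1 + α * ⟪q, (y : EuclideanSpace ℝ (Fin d))⟫) * Real.exp (-(α * G))) =
            (1 + α * ⟪a • p + b • q, (y : EuclideanSpace ℝ (Fin d))⟫) * Real.exp (-(α * G)) := by
          rw [hinn]
          have : a + b = 1 := hab
          nlinarith [Real.exp_pos (-(α * G))]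
        linarith
      have step2 : (1 + α * ⟪a • p + b • q, (y : EuclideanSpace ℝ (Fin d))⟫) *
          Real.exp (-(α * G)) < Real.exp (α * f (a • p + b • q)) * Real.exp (α * ε) := by
        have h5 : Real.log (1 + α * ⟪a • p + b • q, (y : EuclideanSpace ℝ (Fin d))⟫) - α * G <
            α * (f (a • p + b • q) + ε) := by
          have h6 := mul_lt_mul_of_pos_left hy hα
          have h7 : α * ((1/α) * Real.log (1 + α * ⟪a • p + b • q,
              (y : EuclideanSpace ℝ (Fin d))⟫) - G)
              = Real.log (1 + α * ⟪a • p + b • q, (y : EuclideanSpace ℝ (Fin d))⟫) - α * G := by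
            field_simp; try ring
          rw [h7] at h6
          exact h6
        calc (1 + α * ⟪a • p + b • q, (y : EuclideanSpace ℝ (Fin d))⟫) * Real.exp (-(α * G))
            = Real.exp (Real.log (1 + α * ⟪a • p + b • q,
                (y : EuclideanSpace ℝ (Fin d))⟫) - α * G) := by
              rw [Real.exp_sub, Real.exp_log hAx, div_eq_mul_inv, Real.exp_neg]
          _ < Real.exp (α * (f (a • p + b • q) + ε)) := Real.exp_lt_exp.mpr h5
          _ = Real.exp (α * f (a • p + b • q)) * Real.exp (α * ε) := by
              rw [← Real.exp_add, mul_add]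
      linarith
    -- conclude by letting ε → 0
    by_contra hcon
    push_neg at hcon
    set A := a * Real.exp (α * f p) + b * Real.exp (α * f q) with hA
    set B := Real.exp (α * f (a • p + b • q)) with hB
    have hBpos : 0 < B := Real.exp_pos _
    have hr : 1 < A / B := (one_lt_div hBpos).mpr hcon
    have hlogpos : 0 < Real.log (A / B) := Real.log_pos hr
    set ε : ℝ := Real.log (A / B) / (2 * α) with hεdef
    have hεpos : 0 < ε := div_pos hlogpos (by positivity)
    have hk := key ε hεpos
    have hαε : α * ε = Real.log (A / B) / 2 := by
      rw [hεdef]; field_simp; try ring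
    have h8 : Real.exp (α * ε) < A / B := by
      rw [hαε]
      calc Real.exp (Real.log (A / B) / 2) < Real.exp (Real.log (A / B)) := by
            apply Real.exp_lt_exp.mpr; linarith
        _ = A / B := Real.exp_log (by positivity)
    have h9 : B * Real.exp (α * ε) < B * (A / B) := mul_lt_mul_of_pos_left h8 hBpos
    rw [mul_div_cancel₀ _ hBpos.ne'] at h9
    nlinarith


theorem backward_dir {d : ℕ} {α : ℝ} (hα : 0 < α) (f : EuclideanSpace ℝ (Fin d) → ℝ)
    (hconc : ConcaveOn ℝ {x : EuclideanSpace ℝ (Fin d) | ∀ i, 0 < x i}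
      (fun x => Real.exp (α * f x))) :
    ∀ x : EuclideanSpace ℝ (Fin d), (∀ i, 0 < x i) →
      (⨅ y : {z : EuclideanSpace ℝ (Fin d) // ∀ i, 0 < z i},
        ((1/α) * Real.log (1 + α * ⟪x, (y : EuclideanSpace ℝ (Fin d))⟫) -
          ⨅ x' : {z : EuclideanSpace ℝ (Fin d) // ∀ i, 0 < z i},
            ((1/α) * Real.log
                (1 + α * ⟪(x' : EuclideanSpace ℝ (Fin d)),
                  (y : EuclideanSpace ℝ (Fin d))⟫) -
              f x'))) = f x := by
  classical
  haveI : Nonempty {z : EuclideanSpace ℝ (Fin d) // ∀ i, 0 < z i} :=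
    ⟨⟨(WithLp.toLp 2 (fun _ => (1:ℝ)) : EuclideanSpace ℝ (Fin d)), fun _ => by simp⟩⟩
  have hαne : α ≠ 0 := hα.ne'
  set ones : EuclideanSpace ℝ (Fin d) := WithLp.toLp 2 (fun _ => (1:ℝ)) with honesdef
  have hones : ∀ v : EuclideanSpace ℝ (Fin d), ⟪ones, v⟫ = ∑ i, v i := by
    intro v
    rw [inner_eq_sum]
    simp only [honesdef]
    simp
  have hPopen : IsOpen {x : EuclideanSpace ℝ (Fin d) | ∀ i, 0 < x i} := by
    have : {x : EuclideanSpace ℝ (Fin d) | ∀ i, 0 < x i} =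
        ⋂ i, (fun x : EuclideanSpace ℝ (Fin d) => x i) ⁻¹' Set.Ioi 0 := by
      ext x; simp [Set.mem_iInter]
    rw [this]
    exact isOpen_iInter_of_finite fun i => (PiLp.continuous_apply _ _ i).isOpen_preimage _ isOpen_Ioi
  intro x₀ hx₀
  have hx₀' : x₀ ∈ {x : EuclideanSpace ℝ (Fin d) | ∀ i, 0 < x i} := hx₀
  obtain ⟨s, hs⟩ := exists_supergrad hPopen hconc hx₀'
  have hs' : ∀ x : EuclideanSpace ℝ (Fin d), (∀ i, 0 < x i) →
      Real.exp (α * f x) ≤ (Real.exp (α * f x₀) - ⟪s, x₀⟫) + ⟪s, x⟫ := by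
    intro x hx
    have := hs x hx
    rw [inner_sub_right] at this
    linarith
  -- nonnegativity of the slope
  have hsnn : ∀ i, 0 ≤ s i := by
    intro i
    by_contra hsi
    push_neg at hsi
    set T : ℝ := Real.exp (α * f x₀) / (-(s i)) with hTdef
    have hT : 0 < T := div_pos (Real.exp_pos _) (by linarith)
    set xT : EuclideanSpace ℝ (Fin d) := x₀ + T • EuclideanSpace.single i 1 with hxTdef
    have hxT : ∀ j, 0 < xT j := by
      intro j
      show 0 < x₀ j + T * (EuclideanSpace.single i (1:ℝ)) j
      rw [EuclideanSpace.single_apply]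
      split_ifs with hj
      · have := hx₀ j; nlinarith
      · have := hx₀ j; linarith
    have hinner : ⟪s, xT - x₀⟫ = T * s i := by
      have h1 : xT - x₀ = T • EuclideanSpace.single i 1 := by
        rw [hxTdef]; abel
      rw [h1, real_inner_smul_right]
      congr 1
      rw [inner_eq_sum]
      simp [EuclideanSpace.single_apply]
    have h2 := hs xT hxT
    rw [hinner] at h2
    have h3 : T * s i = -Real.exp (α * f x₀) := by
      rw [hTdef, div_neg, neg_mul, div_mul_cancel₀ _ hsi.ne]
    rw [h3] at h2
    have := Real.exp_pos (α * f xT)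
    linarith
  -- nonnegativity of the intercept
  have hc₀ : 0 ≤ Real.exp (α * f x₀) - ⟪s, x₀⟫ := by
    by_contra hB
    push_neg at hB
    have hA : 0 < Real.exp (α * f x₀) := Real.exp_pos _
    have hBpos : 0 < ⟪s, x₀⟫ := by linarith
    set ε : ℝ := min (1/2) ((⟪s, x₀⟫ - Real.exp (α * f x₀)) / (2 * ⟪s, x₀⟫)) with hεdef
    have hε0 : 0 < ε := lt_min (by norm_num) (div_pos (by linarith) (by linarith))
    have hεx : ∀ i, 0 < (ε • x₀) i := fun i => by
      show 0 < ε * x₀ i; exact mul_pos hε0 (hx₀ i)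
    have h4 := hs' (ε • x₀) hεx
    rw [real_inner_smul_right] at h4
    have haux : ∀ B A : ℝ, 0 < B → (B - A) / (2 * B) * B = (B - A) / 2 := by
      intro B A hBp
      field_simp
    have h5 : ε * ⟪s, x₀⟫ ≤ (⟪s, x₀⟫ - Real.exp (α * f x₀)) / 2 := by
      have := min_le_right (1/2 : ℝ) ((⟪s, x₀⟫ - Real.exp (α * f x₀)) / (2 * ⟪s, x₀⟫))
      rw [← hεdef] at this
      have h6 := mul_le_mul_of_nonneg_right this hBpos.le
      calc ε * ⟪s, x₀⟫ ≤ (⟪s, x₀⟫ - Real.exp (α * f x₀)) / (2 * ⟪s, x₀⟫) * ⟪s, x₀⟫ := h6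
        _ = (⟪s, x₀⟫ - Real.exp (α * f x₀)) / 2 := haux _ _ hBpos
    have := Real.exp_pos (α * f (ε • x₀))
    linarith
  -- inner infima are bounded below, for every y
  have hbddall : ∀ y : {z : EuclideanSpace ℝ (Fin d) // ∀ i, 0 < z i},
      BddBelow (Set.range fun x' : {z : EuclideanSpace ℝ (Fin d) // ∀ i, 0 < z i} =>
        ((1/α) * Real.log (1 + α * ⟪(x' : EuclideanSpace ℝ (Fin d)),
          (y : EuclideanSpace ℝ (Fin d))⟫) - f x')) := by
    intro y
    have hdom1 : ∀ x : EuclideanSpace ℝ (Fin d), (∀ i, 0 < x i) →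
        Real.exp (α * f x) ≤ ((Real.exp (α * f x₀) - ⟪s, x₀⟫) + 1) +
          ⟪s + ones, x⟫ := by
      intro x hx
      have h1 := hs' x hx
      rw [inner_add_left, hones]
      have h2 : (0:ℝ) ≤ ∑ i, x i := Finset.sum_nonneg fun i _ => (hx i).le
      linarith
    obtain ⟨m, hm⟩ := term_lower_bound hα f
      (by linarith : (0:ℝ) < (Real.exp (α * f x₀) - ⟪s, x₀⟫) + 1)
      (fun i => by show 0 < s i + 1; have := hsnn i; linarith) hdom1
      (y : EuclideanSpace ℝ (Fin d)) y.2
    exact ⟨m, by rintro _ ⟨x', rfl⟩; exact hm x'.1 x'.2⟩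
  -- each outer term is at least f x₀
  have houter : ∀ y : {z : EuclideanSpace ℝ (Fin d) // ∀ i, 0 < z i},
      f x₀ ≤ (1/α) * Real.log (1 + α * ⟪x₀, (y : EuclideanSpace ℝ (Fin d))⟫) -
        ⨅ x' : {z : EuclideanSpace ℝ (Fin d) // ∀ i, 0 < z i},
          ((1/α) * Real.log (1 + α * ⟪(x' : EuclideanSpace ℝ (Fin d)),
            (y : EuclideanSpace ℝ (Fin d))⟫) - f x') := by
    intro y
    have h3 := ciInf_le (hbddall y) (⟨x₀, hx₀⟩ : {z : EuclideanSpace ℝ (Fin d) // ∀ i, 0 < z i})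
    simp only at h3
    linarith
  have hge := le_ciInf houter
  refine le_antisymm ?_ hge
  -- the upper bound: f^{cc}(x₀) ≤ f(x₀)
  have hδbound : ∀ δ : ℝ, 0 < δ →
      (⨅ y : {z : EuclideanSpace ℝ (Fin d) // ∀ i, 0 < z i},
        ((1/α) * Real.log (1 + α * ⟪x₀, (y : EuclideanSpace ℝ (Fin d))⟫) -
          ⨅ x' : {z : EuclideanSpace ℝ (Fin d) // ∀ i, 0 < z i},
            ((1/α) * Real.log (1 + α * ⟪(x' : EuclideanSpace ℝ (Fin d)),
              (y : EuclideanSpace ℝ (Fin d))⟫) - f x'))) ≤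
      (1/α) * Real.log (Real.exp (α * f x₀) + δ * (1 + ∑ i, x₀ i)) := by
    intro δ hδ0
    set c'' : ℝ := (Real.exp (α * f x₀) - ⟪s, x₀⟫) + δ with hc''def
    have hc''pos : 0 < c'' := by rw [hc''def]; linarith
    set s'' : EuclideanSpace ℝ (Fin d) :=
      s + δ • ones with hs''def
    have hs''co : ∀ i, s'' i = s i + δ := by
      intro i
      show s i + δ * ones i = s i + δ
      simp only [honesdef]
      ring
    have hs''pos : ∀ i, 0 < s'' i := fun i => by rw [hs''co i]; have := hsnn i; linarith
    have hs''inner : ∀ v : EuclideanSpace ℝ (Fin d), ⟪s'', v⟫ = ⟪s, v⟫ + δ * ∑ i, v i := by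
      intro v
      rw [hs''def, inner_add_left, real_inner_smul_left, hones]
    have hdom'' : ∀ x : EuclideanSpace ℝ (Fin d), (∀ i, 0 < x i) →
        Real.exp (α * f x) ≤ c'' + ⟪s'', x⟫ := by
      intro x hx
      have h1 := hs' x hx
      rw [hs''inner, hc''def]
      have h2 : (0:ℝ) ≤ ∑ i, x i := Finset.sum_nonneg fun i _ => (hx i).le
      nlinarith
    set ystar : {z : EuclideanSpace ℝ (Fin d) // ∀ i, 0 < z i} :=
      ⟨(α * c'')⁻¹ • s'', fun i => by
        show 0 < (α * c'')⁻¹ * s'' i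
        exact mul_pos (inv_pos.mpr (by positivity)) (hs''pos i)⟩ with hystar
    have hkey : ∀ v : EuclideanSpace ℝ (Fin d),
        1 + α * ⟪v, (ystar : EuclideanSpace ℝ (Fin d))⟫ = (c'' + ⟪s'', v⟫) / c'' := by
      intro v
      show 1 + α * ⟪v, (α * c'')⁻¹ • s''⟫ = (c'' + ⟪s'', v⟫) / c''
      rw [real_inner_smul_right,
        show (⟪v, s''⟫:ℝ) = ⟪s'', v⟫ from real_inner_comm _ _]
      field_simp
    have glow : ∀ x' : {z : EuclideanSpace ℝ (Fin d) // ∀ i, 0 < z i},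
        -((1/α) * Real.log c'') ≤
          (1/α) * Real.log (1 + α * ⟪(x' : EuclideanSpace ℝ (Fin d)),
            (ystar : EuclideanSpace ℝ (Fin d))⟫) - f x' := by
      intro x'
      have h1 := hdom'' x'.1 x'.2
      have hApos : 0 < c'' + ⟪s'', (x' : EuclideanSpace ℝ (Fin d))⟫ :=
        lt_of_lt_of_le (Real.exp_pos _) h1
      have hratio : Real.exp (α * f x'.1) / c'' ≤
          1 + α * ⟪(x' : EuclideanSpace ℝ (Fin d)), (ystar : EuclideanSpace ℝ (Fin d))⟫ := by
        rw [hkey]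
        exact (div_le_div_iff_of_pos_right hc''pos).mpr h1
      have hlog := Real.log_le_log (by positivity) hratio
      rw [Real.log_div (Real.exp_ne_zero _) hc''pos.ne', Real.log_exp] at hlog
      have h6 := mul_le_mul_of_nonneg_left hlog (by positivity : (0:ℝ) ≤ 1/α)
      have h7 : (1/α) * (α * f x'.1 - Real.log c'') = f x'.1 - (1/α) * Real.log c'' := by
        field_simp
      rw [h7] at h6
      linarith
    have hglow' := le_ciInf glow
    have hmain := ciInf_le ⟨f x₀, by rintro _ ⟨y, rfl⟩; exact houter y⟩ ystar
    have hcx₀ : (1/α) * Real.log (1 + α * ⟪x₀, (ystar : EuclideanSpace ℝ (Fin d))⟫) +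
        (1/α) * Real.log c'' = (1/α) * Real.log (c'' + ⟪s'', x₀⟫) := by
      rw [hkey x₀]
      have hApos : 0 < c'' + ⟪s'', x₀⟫ := by
        have := inner_nonneg' s'' x₀ (fun i => (hs''pos i).le) (fun i => (hx₀ i).le)
        linarith
      rw [Real.log_div hApos.ne' hc''pos.ne']
      ring
    have hfinal : c'' + ⟪s'', x₀⟫ = Real.exp (α * f x₀) + δ * (1 + ∑ i, x₀ i) := by
      rw [hs''inner, hc''def]
      ring
    calc (⨅ y : {z : EuclideanSpace ℝ (Fin d) // ∀ i, 0 < z i},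
          ((1/α) * Real.log (1 + α * ⟪x₀, (y : EuclideanSpace ℝ (Fin d))⟫) -
            ⨅ x' : {z : EuclideanSpace ℝ (Fin d) // ∀ i, 0 < z i},
              ((1/α) * Real.log (1 + α * ⟪(x' : EuclideanSpace ℝ (Fin d)),
                (y : EuclideanSpace ℝ (Fin d))⟫) - f x')))
        ≤ (1/α) * Real.log (1 + α * ⟪x₀, (ystar : EuclideanSpace ℝ (Fin d))⟫) -
            ⨅ x' : {z : EuclideanSpace ℝ (Fin d) // ∀ i, 0 < z i},
              ((1/α) * Real.log (1 + α * ⟪(x' : EuclideanSpace ℝ (Fin d)),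
                (ystar : EuclideanSpace ℝ (Fin d))⟫) - f x') := hmain
      _ ≤ (1/α) * Real.log (1 + α * ⟪x₀, (ystar : EuclideanSpace ℝ (Fin d))⟫) +
            (1/α) * Real.log c'' := by linarith
      _ = (1/α) * Real.log (c'' + ⟪s'', x₀⟫) := hcx₀
      _ = (1/α) * Real.log (Real.exp (α * f x₀) + δ * (1 + ∑ i, x₀ i)) := by rw [hfinal]
  -- let δ → 0
  set I : ℝ := ⨅ y : {z : EuclideanSpace ℝ (Fin d) // ∀ i, 0 < z i},
      ((1/α) * Real.log (1 + α * ⟪x₀, (y : EuclideanSpace ℝ (Fin d))⟫) -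
        ⨅ x' : {z : EuclideanSpace ℝ (Fin d) // ∀ i, 0 < z i},
          ((1/α) * Real.log (1 + α * ⟪(x' : EuclideanSpace ℝ (Fin d)),
            (y : EuclideanSpace ℝ (Fin d))⟫) - f x')) with hIdef
  have hM : (0:ℝ) < 1 + ∑ i, x₀ i := by
    have : (0:ℝ) ≤ ∑ i, x₀ i := Finset.sum_nonneg fun i _ => (hx₀ i).le
    linarith
  have hexpI : Real.exp (α * I) ≤ Real.exp (α * f x₀) := by
    apply le_of_forall_pos_le_add
    intro ε hε
    have h1 := hδbound (ε / (1 + ∑ i, x₀ i)) (div_pos hε hM)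
    have hargpos : 0 < Real.exp (α * f x₀) + ε / (1 + ∑ i, x₀ i) * (1 + ∑ i, x₀ i) := by
      positivity
    have h2 := mul_le_mul_of_nonneg_left h1 hα.le
    have h3 : α * ((1/α) * Real.log (Real.exp (α * f x₀) +
        ε / (1 + ∑ i, x₀ i) * (1 + ∑ i, x₀ i))) = Real.log (Real.exp (α * f x₀) +
        ε / (1 + ∑ i, x₀ i) * (1 + ∑ i, x₀ i)) := by
      field_simp
    rw [h3] at h2
    have h4 : Real.exp (α * I) ≤ Real.exp (α * f x₀) + ε / (1 + ∑ i, x₀ i) * (1 + ∑ i, x₀ i) := by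
      calc Real.exp (α * I) ≤ Real.exp (Real.log (Real.exp (α * f x₀) +
            ε / (1 + ∑ i, x₀ i) * (1 + ∑ i, x₀ i))) := Real.exp_le_exp.mpr h2
        _ = _ := Real.exp_log hargpos
    rw [div_mul_cancel₀ _ hM.ne'] at h4
    exact h4
  have h5 : α * I ≤ α * f x₀ := Real.exp_le_exp.mp hexpI
  exact (mul_le_mul_iff_right₀ hα).mp h5

/-- for the cost `c(x,y) = (1/α) log(1 + α x·y)` on the positive
quadrant, `f` is `c`-concave (i.e. `f^{cc} = f` on the quadrant) iff `e^{αf}`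
is concave there. -/
theorem stmt6 {d : ℕ} (α : ℝ) (hα : 0 < α)
    (f : EuclideanSpace ℝ (Fin d) → ℝ) :
    (∀ x : EuclideanSpace ℝ (Fin d), (∀ i, 0 < x i) →
      (⨅ y : {z : EuclideanSpace ℝ (Fin d) // ∀ i, 0 < z i},
        ((1/α) * Real.log (1 + α * ⟪x, (y : EuclideanSpace ℝ (Fin d))⟫) -
          ⨅ x' : {z : EuclideanSpace ℝ (Fin d) // ∀ i, 0 < z i},
            ((1/α) * Real.log
                (1 + α * ⟪(x' : EuclideanSpace ℝ (Fin d)),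
                  (y : EuclideanSpace ℝ (Fin d))⟫) -
              f x'))) = f x)
    ↔ ConcaveOn ℝ {x : EuclideanSpace ℝ (Fin d) | ∀ i, 0 < x i}
        (fun x => Real.exp (α * f x)) := by
  
  constructor
  · intro h
    exact forward_dir hα f h (forward_bdd hα f h)
  · intro hconc
    exact backward_dir hα f hconc
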